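/- The group Out^0(W_3) is isomorphic to W_3, the free product of three copies of Z/2Z: it has presentation ⟨y_1, y_2, y_3 | y_1² = y_2² = y_3² = 1⟩ with no other relations. -/

import Mathlib

/-- Defining relations of `Wₙ`: each generator squares to the identity. -/
def wrels (n : ℕ) : Set (FreeGroup (Fin n)) :=
  {r | ∃ i : Fin n, r = FreeGroup.of i * FreeGroup.of i}

/-- The universal right-angled Coxeter group `Wₙ`. -/
abbrev W (n : ℕ) := PresentedGroup (wrels n)

/-- The generator `aᵢ` of `Wₙ`. -/
def gen {n : ℕ} (i : Fin n) : W n := PresentedGroup.of i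

/-- `φ` is the partial conjugation with acting letter `aᵢ` and domain `D`. -/
def IsPC {n : ℕ} (φ : W n ≃* W n) (i : Fin n) (D : Finset (Fin n)) : Prop :=
  (∀ j ∈ D, φ (gen j) = gen i * gen j * gen i) ∧ (∀ j ∉ D, φ (gen j) = gen j)

/-- The subgroup of inner automorphisms of `Wₙ`. -/
def InnSub (n : ℕ) : Subgroup (MulAut (W n)) :=
  (MulAut.conj : W n →* MulAut (W n)).range

instance innSubNormal (n : ℕ) : (InnSub n).Normal := by
  constructor
  rintro x ⟨g, rfl⟩ ψ
  refine ⟨ψ g, ?_⟩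
  ext h
  simp [MulAut.conj, mul_assoc]

/-- The outer automorphism group `Out(Wₙ)`. -/
abbrev OutW (n : ℕ) := MulAut (W n) ⧸ InnSub n

/-- `Out⁰(Wₙ)`: the subgroup of `Out(Wₙ)` generated by the classes of the partial
conjugations. -/
def Out0 (n : ℕ) : Subgroup (OutW n) :=
  Subgroup.closure {q | ∃ (φ : MulAut (W n)) (i : Fin n) (D : Finset (Fin n)),
    i ∉ D ∧ IsPC φ i D ∧ q = QuotientGroup.mk' (InnSub n) φ}


section Basic
variable {n : ℕ} {G : Type*} [Group G]

theorem gen_mul_self (i : Fin n) : gen i * gen i = 1 := by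
  have h : FreeGroup.of i * FreeGroup.of i ∈ Subgroup.normalClosure (wrels n) :=
    Subgroup.subset_normalClosure ⟨i, rfl⟩
  have : (PresentedGroup.mk (wrels n)) (FreeGroup.of i * FreeGroup.of i) = 1 :=
    (QuotientGroup.eq_one_iff _).2 h
  simpa [gen, PresentedGroup.of] using this

theorem gen_inv (i : Fin n) : (gen i)⁻¹ = gen i :=
  inv_eq_of_mul_eq_one_right (gen_mul_self i)

/-- Build a homomorphism out of `W n` from involutive images. -/
def mkHom (g : Fin n → G) (hg : ∀ i, g i * g i = 1) : W n →* G :=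
  PresentedGroup.toGroup (f := g) (by rintro r ⟨i, rfl⟩; simp [hg i])

@[simp] theorem mkHom_gen (g : Fin n → G) (hg : ∀ i, g i * g i = 1) (i : Fin n) :
    mkHom g hg (gen i) = g i :=
  PresentedGroup.toGroup.of _

theorem homExt {f₁ f₂ : W n →* G} (h : ∀ i, f₁ (gen i) = f₂ (gen i)) : f₁ = f₂ :=
  PresentedGroup.ext h

end Basic

section PC
variable {n : ℕ}

/-- images of the partial conjugation with acting letter `i` and domain `{j}`. -/
def pcImg (i j k : Fin n) : W n :=
  if k = j then gen i * gen k * gen i else gen k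

theorem gen_mul_cancel (i : Fin n) (x : W n) : gen i * (gen i * x) = x := by
  rw [← mul_assoc, gen_mul_self, one_mul]

theorem pcImg_sq (i j k : Fin n) : pcImg i j k * pcImg i j k = 1 := by
  unfold pcImg
  split
  · simp only [mul_assoc, gen_mul_cancel, gen_mul_self, mul_one, one_mul]
  · exact gen_mul_self k

/-- the partial conjugation `y_{i,{j}}` as an endomorphism. -/
def pcHom (i j : Fin n) : W n →* W n := mkHom (pcImg i j) (pcImg_sq i j)

theorem pcHom_gen (i j k : Fin n) : pcHom i j (gen k) = pcImg i j k := by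
  simp [pcHom]

theorem pcHom_gen_of_ne (i j k : Fin n) (h : k ≠ j) : pcHom i j (gen k) = gen k := by
  simp [pcHom_gen, pcImg, h]

theorem pcHom_gen_self (i j : Fin n) : pcHom i j (gen j) = gen i * gen j * gen i := by
  simp [pcHom_gen, pcImg]

theorem pcHom_invol (i j : Fin n) (hij : i ≠ j) :
    (pcHom i j).comp (pcHom i j) = MonoidHom.id (W n) := by
  apply homExt
  intro k
  by_cases hk : k = j
  · rw [hk]
    simp only [MonoidHom.comp_apply, MonoidHom.id_apply, pcHom_gen_self, map_mul,
      pcHom_gen_of_ne i j i hij, pcHom_gen_self]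
    simp only [mul_assoc, gen_mul_cancel, gen_mul_self, mul_one, one_mul]
  · simp [pcHom_gen_of_ne i j k hk]

/-- the partial conjugation `y_{i,{j}}` as an automorphism. -/
def pc (i j : Fin n) (hij : i ≠ j) : MulAut (W n) :=
  MonoidHom.toMulEquiv (pcHom i j) (pcHom i j) (pcHom_invol i j hij) (pcHom_invol i j hij)

theorem pc_apply (i j : Fin n) (hij : i ≠ j) (x : W n) : pc i j hij x = pcHom i j x := rfl

theorem pc_mul_self (i j : Fin n) (hij : i ≠ j) : pc i j hij * pc i j hij = 1 := by
  ext x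
  have := DFunLike.congr_fun (pcHom_invol i j hij) x
  simpa [pc_apply] using this

end PC

section Hgroup

/-- The group `ℤ² ⋊ ℤˣ` (sign acting by negation). -/
@[ext] structure HH where
  v : Fin 2 → ℤ
  s : ℤˣ

namespace HH

instance : Mul HH := ⟨fun a b => ⟨a.v + (a.s : ℤ) • b.v, a.s * b.s⟩⟩
instance : One HH := ⟨⟨0, 1⟩⟩
instance : Inv HH := ⟨fun a => ⟨-((a.s : ℤ) • a.v), a.s⟩⟩

theorem mul_def (a b : HH) : a * b = ⟨a.v + (a.s : ℤ) • b.v, a.s * b.s⟩ := rfl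
theorem one_def : (1 : HH) = ⟨0, 1⟩ := rfl
theorem inv_def (a : HH) : a⁻¹ = ⟨-((a.s : ℤ) • a.v), a.s⟩ := rfl

instance : Group HH :=
  Group.ofLeftAxioms
    (fun a b c => by
      ext <;> simp [mul_def, Units.val_mul, mul_smul, smul_add, add_assoc, mul_assoc])
    (fun a => by ext <;> simp [mul_def, one_def])
    (fun a => by
      ext <;> simp [mul_def, one_def, inv_def, Units.val_mul, smul_smul, Int.units_mul_self])

end HH

end Hgroup

section Rep2

open Matrix

/-- The three `2×2` integer matrices. -/
def Mv : Fin 3 → Matrix (Fin 2) (Fin 2) ℤ :=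
  ![!![1,0;0,-1], !![1,2;0,-1], !![-1,0;2,1]]

theorem Mv_sq (i : Fin 3) : Mv i * Mv i = 1 := by
  fin_cases i <;>
    simp [Mv, Matrix.mul_fin_two, Matrix.one_fin_two]

/-- the units version -/
def MvU (i : Fin 3) : (Matrix (Fin 2) (Fin 2) ℤ)ˣ := ⟨Mv i, Mv i, Mv_sq i, Mv_sq i⟩

/-- The 2-dimensional matrix representation of `W 3`. -/
def mu : W 3 →* (Matrix (Fin 2) (Fin 2) ℤ)ˣ :=
  mkHom MvU (fun i => Units.ext (Mv_sq i))

/-- the "twist" endomorphism of `HH` attached to an integer matrix. -/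
def twHom (M : Matrix (Fin 2) (Fin 2) ℤ) : HH →* HH where
  toFun a := ⟨M.mulVec a.v, a.s⟩
  map_one' := by ext <;> simp [HH.one_def]
  map_mul' a b := by
    refine HH.ext ?_ rfl
    show M.mulVec (a.v + (a.s : ℤ) • b.v) = M.mulVec a.v + (a.s : ℤ) • M.mulVec b.v
    rw [Matrix.mulVec_add, Matrix.mulVec_smul]

theorem twHom_apply (M : Matrix (Fin 2) (Fin 2) ℤ) (a : HH) :
    twHom M a = ⟨M.mulVec a.v, a.s⟩ := rfl

theorem twHom_mul (M N : Matrix (Fin 2) (Fin 2) ℤ) (a : HH) :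
    twHom (M * N) a = twHom M (twHom N a) := by
  ext <;> simp only [twHom_apply, Matrix.mulVec_mulVec]

theorem twHom_one (a : HH) : twHom 1 a = a := by
  ext <;> simp [twHom_apply]

/-- the images of the generators of `W 3` in `HH`. -/
def hHimg : Fin 3 → HH := ![⟨0, -1⟩, ⟨![1,0], -1⟩, ⟨![0,1], -1⟩]

theorem HH.neg_invol (v : Fin 2 → ℤ) : (⟨v, -1⟩ : HH) * ⟨v, -1⟩ = 1 := by
  ext <;> simp [HH.mul_def, HH.one_def]

theorem hHimg_sq (i : Fin 3) : hHimg i * hHimg i = 1 := by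
  fin_cases i <;> exact HH.neg_invol _

/-- The crossed homomorphism `W 3 → ℤ² ⋊ ℤˣ`. -/
def hW : W 3 →* HH := mkHom hHimg hHimg_sq

/-- the three basic partial conjugations as automorphisms -/
theorem ne02 : (0 : Fin 3) ≠ 2 := by decide
theorem ne12 : (1 : Fin 3) ≠ 2 := by decide
theorem ne21 : (2 : Fin 3) ≠ 1 := by decide

def sig : Fin 3 → MulAut (W 3) :=
  ![pc 0 2 ne02, pc 1 2 ne12, pc 2 1 ne21]

theorem sig_sq (i : Fin 3) : sig i * sig i = 1 := by
  fin_cases i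
  · exact pc_mul_self 0 2 ne02
  · exact pc_mul_self 1 2 ne12
  · exact pc_mul_self 2 1 ne21

/-- The homomorphism `Φ : W 3 →* MulAut (W 3)`, `xᵢ ↦ σᵢ`. -/
def Phi : W 3 →* MulAut (W 3) := mkHom sig sig_sq

end Rep2

section Equivar

theorem equivar_gen (j : Fin 3) :
    hW.comp (MulEquiv.toMonoidHom (Phi (gen j))) = (twHom (Mv j)).comp hW := by
  apply homExt; intro k
  have hPhi : Phi (gen j) = sig j := mkHom_gen _ _ _
  rw [hPhi]
  fin_cases j <;> fin_cases k <;>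
    simp [sig, pc_apply, pcHom_gen, pcImg, hW, mkHom_gen, hHimg, twHom_apply,
      HH.mul_def, Mv, Matrix.mulVec, dotProduct, Fin.sum_univ_two] <;>
    (ext x <;> fin_cases x <;> simp)

end Equivar

/-- The key equivariance: `h ∘ Φ(w) = (twist by μ(w)) ∘ h`. -/
theorem equivar (w : W 3) (x : W 3) :
    hW (Phi w x) = twHom ((mu w : (Matrix (Fin 2) (Fin 2) ℤ)ˣ) : Matrix (Fin 2) (Fin 2) ℤ)
      (hW x) := by
  let S : Subgroup (W 3) :=
    { carrier := {w | ∀ x, hW (Phi w x) =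
        twHom ((mu w : (Matrix (Fin 2) (Fin 2) ℤ)ˣ) : Matrix (Fin 2) (Fin 2) ℤ) (hW x)}
      one_mem' := by
        intro x
        simp [twHom_one]
      mul_mem' := by
        intro a b ha hb x
        have h1 : Phi (a * b) x = Phi a (Phi b x) := by
          rw [map_mul]; rfl
        rw [h1, ha, hb, map_mul, Units.val_mul, twHom_mul]
      inv_mem' := by
        intro a ha x
        have h1 : Phi a (Phi a⁻¹ x) = x := by
          rw [← MulAut.mul_apply, ← map_mul, mul_inv_cancel, map_one]; rfl
        have h2 := ha (Phi a⁻¹ x)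
        rw [h1] at h2
        have h3 : ((mu a⁻¹).val) * ((mu a).val) = 1 := by
          rw [← Units.val_mul, ← map_mul, inv_mul_cancel, map_one, Units.val_one]
        calc hW (Phi a⁻¹ x)
            = twHom 1 (hW (Phi a⁻¹ x)) := (twHom_one _).symm
          _ = twHom ((mu a⁻¹).val) (twHom ((mu a).val) (hW (Phi a⁻¹ x))) := by
              rw [← twHom_mul, h3]
          _ = twHom ((mu a⁻¹).val) (hW x) := by rw [← h2] }
  have hgen : ∀ j : Fin 3, PresentedGroup.of j ∈ S := by
    intro j x
    have := DFunLike.congr_fun (equivar_gen j) x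
    simp only [MonoidHom.comp_apply, MulEquiv.coe_toMonoidHom] at this
    have hmu : (mu (gen j)).val = Mv j := by
      rw [show mu (gen j) = MvU j from mkHom_gen _ _ _]; rfl
    rw [show (PresentedGroup.of j : W 3) = gen j from rfl, hmu]
    exact this
  exact PresentedGroup.generated_by _ S hgen w x

section Coprod

open Monoid

abbrev Z2 := Multiplicative (ZMod 2)

theorem gpow_mod_two {G : Type*} [Group G] (g : G) (hg : g * g = 1) (m : ℕ) :
    g ^ (m % 2) = g ^ m := by
  conv_rhs => rw [← Nat.div_add_mod m 2]
  rw [pow_add, pow_mul, pow_two, hg, one_pow, one_mul]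

/-- homomorphism from `ℤ/2` determined by an involution. -/
def involHom {G : Type*} [Group G] (g : G) (hg : g * g = 1) : Z2 →* G where
  toFun x := g ^ (Multiplicative.toAdd x).val
  map_one' := by simp [ZMod.val_zero]
  map_mul' x y := by
    show g ^ (Multiplicative.toAdd (x * y)).val = _
    rw [toAdd_mul, ZMod.val_add, gpow_mod_two g hg, pow_add]

theorem involHom_apply_ne_one {G : Type*} [Group G] (g : G) (hg : g * g = 1)
    (x : Z2) (hx : x ≠ 1) : involHom g hg x = g := by
  have hv : (Multiplicative.toAdd x).val = 1 := by
    revert hx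
    have : ∀ y : ZMod 2, y ≠ 0 → y.val = 1 := by decide
    exact fun hx => this _ (fun h => hx (by
      have : x = Multiplicative.ofAdd 0 := by
        simp [← h]
      simpa using this))
  show g ^ (Multiplicative.toAdd x).val = g
  rw [hv, pow_one]

/-- the generator of `Z2` -/
def z2gen : Z2 := Multiplicative.ofAdd 1

theorem z2gen_ne_one : z2gen ≠ 1 := by decide

theorem z2gen_sq : z2gen * z2gen = 1 := by decide

/-- the free product of three copies of `ℤ/2` -/
abbrev C3 := Monoid.CoprodI (fun _ : Fin 3 => Z2)

/-- `W 3 → C3` -/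
def eW : W 3 →* C3 :=
  mkHom (fun i => Monoid.CoprodI.of (M := fun _ : Fin 3 => Z2) (i := i) z2gen)
    (fun i => by rw [← MonoidHom.map_mul, z2gen_sq, MonoidHom.map_one])

/-- `C3 → W 3` -/
def eC : C3 →* W 3 :=
  Monoid.CoprodI.lift (fun i => involHom (gen i) (gen_mul_self i))

theorem eC_eW (w : W 3) : eC (eW w) = w := by
  have : eC.comp eW = MonoidHom.id (W 3) := by
    apply homExt
    intro i
    simp only [MonoidHom.comp_apply, MonoidHom.id_apply, eW, mkHom_gen, eC,
      Monoid.CoprodI.lift_of]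
    exact involHom_apply_ne_one _ _ _ z2gen_ne_one
  exact DFunLike.congr_fun this w

end Coprod

section Actions

/-- units of the matrix ring act on vectors -/
instance matUnitsAction {n : ℕ} {R : Type*} [CommRing R] :
    MulAction (Matrix (Fin n) (Fin n) R)ˣ (Fin n → R) where
  smul g v := (g : Matrix (Fin n) (Fin n) R).mulVec v
  one_smul v := Matrix.one_mulVec v
  mul_smul g h v := by
    show ((g * h : _ˣ) : Matrix (Fin n) (Fin n) R).mulVec v = _
    rw [Units.val_mul, ← Matrix.mulVec_mulVec]
    rfl

theorem matUnits_smul_def {n : ℕ} {R : Type*} [CommRing R]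
    (g : (Matrix (Fin n) (Fin n) R)ˣ) (v : Fin n → R) :
    g • v = (g : Matrix (Fin n) (Fin n) R).mulVec v := rfl

end Actions

section PingPong2

open Monoid

def q2 (i : Fin 3) : Z2 →* (Matrix (Fin 2) (Fin 2) ℤ)ˣ :=
  involHom (MvU i) (Units.ext (Mv_sq i))

theorem mu_eq_lift : mu = (Monoid.CoprodI.lift q2).comp eW := by
  apply homExt
  intro i
  simp only [mu, mkHom_gen, MonoidHom.comp_apply, eW, Monoid.CoprodI.lift_of]
  exact (involHom_apply_ne_one _ _ _ z2gen_ne_one).symm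

def X2 : Fin 3 → Set (Fin 2 → ℤ) :=
  ![{v | 0 < v 0 * v 1}, {v | v 1 * (v 0 + v 1) < 0}, {v | v 0 * v 1 < 0 ∧ 0 < v 1 * (v 0 + v 1)}]

theorem mulVec_Mv0 (v : Fin 2 → ℤ) : (Mv 0).mulVec v = ![v 0, -(v 1)] := by
  funext k; fin_cases k <;>
    simp [Mv, Matrix.mulVec, dotProduct, Fin.sum_univ_two] <;> ring

theorem mulVec_Mv1 (v : Fin 2 → ℤ) : (Mv 1).mulVec v = ![v 0 + 2 * v 1, -(v 1)] := by
  funext k; fin_cases k <;>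
    simp [Mv, Matrix.mulVec, dotProduct, Fin.sum_univ_two] <;> ring

theorem mulVec_Mv2 (v : Fin 2 → ℤ) : (Mv 2).mulVec v = ![-(v 0), 2 * v 0 + v 1] := by
  funext k; fin_cases k <;>
    simp [Mv, Matrix.mulVec, dotProduct, Fin.sum_univ_two] <;> ring

theorem ppX2 (i j : Fin 3) (hij : i ≠ j) : ∀ v ∈ X2 j, (Mv i).mulVec v ∈ X2 i := by
  intro v hv
  fin_cases i <;> fin_cases j <;>
    first
    | exact absurd rfl hij
    | (simp [X2, Mv, Matrix.vecHead, Matrix.vecTail, mulVec_Mv0, mulVec_Mv1, mulVec_Mv2] at hv ⊢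
       try obtain ⟨hv1, hv2⟩ := hv
       first
       | (constructor <;>
           nlinarith [sq_nonneg (v 0), sq_nonneg (v 1), sq_nonneg (v 0 + v 1)])
       | nlinarith [sq_nonneg (v 0), sq_nonneg (v 1), sq_nonneg (v 0 + v 1)])

theorem injLift2 : Function.Injective (Monoid.CoprodI.lift q2) := by
  apply Monoid.CoprodI.lift_injective_of_ping_pong q2 ?_ X2 ?_ ?_ ?_
  · left
    simp [Cardinal.mk_fintype]
  · intro i
    fin_cases i
    · exact ⟨![1, 1], by norm_num [X2]⟩
    · exact ⟨![-2, 1], by norm_num [X2]⟩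
    · exact ⟨![-1, 2], by norm_num [X2]⟩
  · intro i j hij
    rw [Function.onFun, Set.disjoint_left]
    intro v hv hv'
    fin_cases i <;> fin_cases j <;>
      first
      | exact absurd rfl hij
      | (simp [X2] at hv hv'
         try obtain ⟨hv1, hv2⟩ := hv
         try obtain ⟨hv1', hv2'⟩ := hv'
         nlinarith [sq_nonneg (v 0), sq_nonneg (v 1), sq_nonneg (v 0 + v 1)])
  · intro i j hij h hh
    have hq : q2 i h = MvU i := involHom_apply_ne_one _ _ _ hh
    rw [hq]
    intro v hv
    obtain ⟨u, hu, rfl⟩ := hv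
    exact ppX2 i j hij u hu

theorem mu_eq_one {w : W 3} (h : mu w = 1) : w = 1 := by
  rw [mu_eq_lift] at h
  have h2 : eW w = 1 := injLift2 (by simpa using h)
  have := eC_eW w
  rw [h2, map_one] at this
  exact this.symm

end PingPong2

section Rep3

open Monoid

/-- the three `3×3` integer matrices (dual geometric representation). -/
def Amat (i : Fin 3) : Matrix (Fin 3) (Fin 3) ℤ :=
  fun k l => if l = i then (if k = i then -1 else 2) else (if k = l then 1 else 0)

theorem mulVec_Amat (i : Fin 3) (u : Fin 3 → ℤ) :
    (Amat i).mulVec u = fun k => if k = i then -(u i) else u k + 2 * u i := by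
  funext k
  fin_cases i <;> fin_cases k <;>
    simp [Amat, Matrix.mulVec, dotProduct, Fin.sum_univ_three] <;> ring

theorem Amat_sq (i : Fin 3) : Amat i * Amat i = 1 := by
  ext k l
  fin_cases i <;> fin_cases k <;> fin_cases l <;>
    simp [Amat, Matrix.mul_apply, Fin.sum_univ_three, Matrix.one_apply]

def AmatU (i : Fin 3) : (Matrix (Fin 3) (Fin 3) ℤ)ˣ := ⟨Amat i, Amat i, Amat_sq i, Amat_sq i⟩

/-- The 3-dimensional matrix representation of `W 3`. -/
def nu : W 3 →* (Matrix (Fin 3) (Fin 3) ℤ)ˣ :=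
  mkHom AmatU (fun i => Units.ext (Amat_sq i))

def q3 (i : Fin 3) : Z2 →* (Matrix (Fin 3) (Fin 3) ℤ)ˣ :=
  involHom (AmatU i) (Units.ext (Amat_sq i))

theorem nu_eq_lift : nu = (Monoid.CoprodI.lift q3).comp eW := by
  apply homExt
  intro i
  simp only [nu, mkHom_gen, MonoidHom.comp_apply, eW, Monoid.CoprodI.lift_of]
  exact (involHom_apply_ne_one _ _ _ z2gen_ne_one).symm

def X3 : Fin 3 → Set (Fin 3 → ℤ) :=
  fun i => {u | 0 < u i ∧ ∀ j, j ≠ i → u i + u j < 0}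

theorem ppX3 (i j : Fin 3) (hij : i ≠ j) : ∀ v ∈ X3 j, (Amat i).mulVec v ∈ X3 i := by
  intro v hv
  obtain ⟨h1, h2⟩ := hv
  rw [mulVec_Amat]
  have hvj : v j + v i < 0 := h2 i hij
  constructor
  · have hlt : (0:ℤ) < -(v i) := by linarith
    simpa using hlt
  · intro k hk
    by_cases hkj : k = j
    · subst hkj
      simp [hk]
      linarith
    · have := h2 k hkj
      simp [hk]
      linarith

theorem injLift3 : Function.Injective (Monoid.CoprodI.lift q3) := by
  apply Monoid.CoprodI.lift_injective_of_ping_pong q3 ?_ X3 ?_ ?_ ?_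
  · left
    simp [Cardinal.mk_fintype]
  · intro i
    refine ⟨fun k => if k = i then 1 else -2, by norm_num [X3], ?_⟩
    intro j hj
    simp [if_neg hj]
  · intro i j hij
    rw [Function.onFun, Set.disjoint_left]
    intro v hv hv'
    have := hv.2 j (Ne.symm hij)
    have := hv'.1
    have := hv.1
    linarith
  · intro i j hij h hh
    have hq : q3 i h = AmatU i := involHom_apply_ne_one _ _ _ hh
    rw [hq]
    intro v hv
    obtain ⟨u, hu, rfl⟩ := hv
    exact ppX3 i j hij u hu

theorem nu_eq_one {w : W 3} (h : nu w = 1) : w = 1 := by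
  rw [nu_eq_lift] at h
  have h2 : eW w = 1 := injLift3 (by simpa using h)
  have := eC_eW w
  rw [h2, map_one] at this
  exact this.symm

end Rep3

section Inj

theorem intu_mul_self (u : ℤˣ) : ((u : ℤ)) * (u : ℤ) = 1 := by
  rcases Int.units_eq_one_or u with h | h <;> simp [h]

theorem HH.conj_s_one (a b : HH) (hb : b.s = 1) : a * b * a⁻¹ = ⟨(a.s : ℤ) • b.v, 1⟩ := by
  refine HH.ext ?_ ?_
  · show (a.v + (a.s : ℤ) • b.v) + (((a.s * b.s : ℤˣ)) : ℤ) • (-((a.s : ℤ) • a.v))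
        = (a.s : ℤ) • b.v
    rw [hb, mul_one]
    have h2 : ((a.s : ℤ)) • (-((a.s : ℤ) • a.v)) = -a.v := by
      rw [smul_neg, smul_smul, intu_mul_self, one_smul]
    rw [h2]
    abel
  · show (a.s * b.s) * a.s = 1
    rw [hb, mul_one]
    exact Int.units_mul_self a.s

theorem hW_gen (i : Fin 3) : hW (gen i) = hHimg i := mkHom_gen hHimg hHimg_sq i

theorem hW_u1 : hW (gen 0 * gen 1) = ⟨![-1, 0], 1⟩ := by
  rw [map_mul, hW_gen, hW_gen]
  ext x
  · fin_cases x <;> simp [hHimg, HH.mul_def]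
  · simp [hHimg, HH.mul_def]

theorem hW_u2 : hW (gen 0 * gen 2) = ⟨![0, -1], 1⟩ := by
  rw [map_mul, hW_gen, hW_gen]
  ext x
  · fin_cases x <;> simp [hHimg, HH.mul_def]
  · simp [hHimg, HH.mul_def]

/-- the scalar-matrix conclusion from the kernel condition -/
theorem mu_scalar_of_conj {w g : W 3} (hconj : Phi w = MulAut.conj g) :
    ((mu w : (Matrix (Fin 2) (Fin 2) ℤ)ˣ) : Matrix (Fin 2) (Fin 2) ℤ)
      = (((hW g).s : ℤ)) • (1 : Matrix (Fin 2) (Fin 2) ℤ) := by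
  have key : ∀ x : W 3, (hW x).s = 1 →
      ((mu w).val).mulVec (hW x).v = ((hW g).s : ℤ) • (hW x).v := by
    intro x hx
    have h1 := equivar w x
    rw [hconj] at h1
    have h2 : MulAut.conj g x = g * x * g⁻¹ := rfl
    rw [h2, map_mul, map_mul, map_inv, HH.conj_s_one (hW g) (hW x) hx, twHom_apply] at h1
    have := congrArg HH.v h1
    exact this.symm
  have c1 := key (gen 0 * gen 1) (by rw [hW_u1])
  have c2 := key (gen 0 * gen 2) (by rw [hW_u2])
  rw [hW_u1] at c1
  rw [hW_u2] at c2
  ext k l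
  have e1 := congrFun c1 k
  have e2 := congrFun c2 k
  fin_cases k <;> fin_cases l <;>
    simp [Matrix.mulVec, dotProduct, Fin.sum_univ_two, Matrix.smul_apply,
      Matrix.one_apply, Pi.smul_apply] at e1 e2 ⊢ <;>
    linarith

/-- centralizer computation in the 3-dimensional representation -/
theorem cent3 (B : Matrix (Fin 3) (Fin 3) ℤ) (h : ∀ i, B * Amat i = Amat i * B) :
    B = (B 0 0) • (1 : Matrix (Fin 3) (Fin 3) ℤ) := by
  have hz : ∀ i l : Fin 3, i ≠ l → B i l = 0 := by
    intro i l hil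
    have e : (B * Amat i) l l = (Amat i * B) l l := by rw [h i]
    fin_cases i <;> fin_cases l <;>
      simp [Amat, Matrix.mul_apply, Fin.sum_univ_three] at e hil ⊢ <;>
      linarith
  have hd : ∀ k : Fin 3, B k k = B 0 0 := by
    intro k
    by_cases hk : k = 0
    · rw [hk]
    · have e : (B * Amat 0) k 0 = (Amat 0 * B) k 0 := by rw [h 0]
      have z1 : B 0 1 = 0 := hz 0 1 (by decide)
      have z2 : B 0 2 = 0 := hz 0 2 (by decide)
      fin_cases k
      · exact absurd rfl hk
      · have z3 : B 1 0 = 0 := hz 1 0 (by decide)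
        have z4 : B 1 2 = 0 := hz 1 2 (by decide)
        simp [Amat, Matrix.mul_apply, Fin.sum_univ_three, z1, z2, z3, z4] at e ⊢
        linarith
      · have z3 : B 2 0 = 0 := hz 2 0 (by decide)
        have z4 : B 2 1 = 0 := hz 2 1 (by decide)
        simp [Amat, Matrix.mul_apply, Fin.sum_univ_three, z1, z2, z3, z4] at e ⊢
        linarith
  ext k l
  by_cases hkl : k = l
  · subst hkl
    simp [Matrix.smul_apply, Matrix.one_apply, hd k]
  · simp [Matrix.smul_apply, Matrix.one_apply, hkl, hz k l hkl]

end Inj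

section Det

/-- the parity homomorphism -/
def eps : W 3 →* ℤˣ := mkHom (fun _ => (-1 : ℤˣ)) (fun _ => Int.units_mul_self (-1))

def detHom2 : (Matrix (Fin 2) (Fin 2) ℤ)ˣ →* ℤˣ :=
  Units.map (Matrix.detMonoidHom : Matrix (Fin 2) (Fin 2) ℤ →* ℤ)

def detHom3 : (Matrix (Fin 3) (Fin 3) ℤ)ˣ →* ℤˣ :=
  Units.map (Matrix.detMonoidHom : Matrix (Fin 3) (Fin 3) ℤ →* ℤ)

theorem det_mu : detHom2.comp mu = eps := by
  apply homExt
  intro i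
  show detHom2 (mu (gen i)) = eps (gen i)
  rw [show mu (gen i) = MvU i from mkHom_gen _ _ _,
    show eps (gen i) = -1 from mkHom_gen _ _ _]
  apply Units.ext
  show ((MvU i).val).det = ((-1 : ℤˣ) : ℤ)
  fin_cases i <;> simp [MvU, Mv, Matrix.det_fin_two]

theorem det_nu : detHom3.comp nu = eps := by
  apply homExt
  intro i
  show detHom3 (nu (gen i)) = eps (gen i)
  rw [show nu (gen i) = AmatU i from mkHom_gen _ _ _,
    show eps (gen i) = -1 from mkHom_gen _ _ _]
  apply Units.ext
  show ((AmatU i).val).det = ((-1 : ℤˣ) : ℤ)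
  fin_cases i <;>
    simp [AmatU, Amat, Matrix.det_fin_three]

end Det

section Main

/-- The crucial injectivity step: if `Φ(w)` is inner, then `w = 1`. -/
theorem inner_imp_one {w g : W 3} (hconj : Phi w = MulAut.conj g) : w = 1 := by
  have hM := mu_scalar_of_conj hconj
  rcases Int.units_eq_one_or (hW g).s with hs | hs
  · -- the positive case : `μ(w) = 1`
    apply mu_eq_one
    apply Units.ext
    rw [hM, hs]
    simp
  · -- the negative case : `μ(w) = -1`, `w` is a central involution
    have hmuw : mu w = -1 := by
      apply Units.ext
      rw [hM, hs]
      simp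
    have hww : w * w = 1 := by
      apply mu_eq_one
      rw [map_mul, hmuw]
      simp
    have hcentral : ∀ v : W 3, v * w = w * v := by
      intro v
      have h1 : v * w * v⁻¹ * w = 1 := by
        apply mu_eq_one
        rw [map_mul, map_mul, map_mul, map_inv, hmuw]
        rw [mul_neg_one (mu v), neg_mul, mul_neg_one, neg_neg, mul_inv_cancel]
      have hwinv : w⁻¹ = w := inv_eq_of_mul_eq_one_right hww
      have h2 : v * w * v⁻¹ = w⁻¹ := eq_inv_of_mul_eq_one_left h1
      rw [hwinv] at h2
      calc v * w = v * w * v⁻¹ * v := by group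
        _ = w * v := by rw [h2]
    -- the 3-dimensional representation forces `w = 1`
    have hBA : ∀ i, (nu w).val * Amat i = Amat i * (nu w).val := by
      intro i
      have h3 : w * gen i = gen i * w := (hcentral (gen i)).symm
      have h4 : nu w * nu (gen i) = nu (gen i) * nu w := by
        rw [← map_mul, ← map_mul, h3]
      have h5 : nu (gen i) = AmatU i := mkHom_gen _ _ _
      have := congrArg Units.val h4
      rw [h5] at this
      exact this
    have hc := cent3 (nu w).val hBA
    set c : ℤ := (nu w).val 0 0 with hcdef
    have hdet3 : ((nu w).val).det = c ^ 3 := by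
      rw [hc]
      rw [Matrix.det_smul]
      simp
    have heps : eps w = 1 := by
      have h6 : detHom2 (mu w) = eps w := DFunLike.congr_fun det_mu w
      rw [hmuw] at h6
      rw [← h6]
      apply Units.ext
      show ((-1 : (Matrix (Fin 2) (Fin 2) ℤ)ˣ).val).det = 1
      simp [Matrix.det_fin_two]
    have h7 : detHom3 (nu w) = 1 := by
      have := DFunLike.congr_fun det_nu w
      simp only [MonoidHom.comp_apply] at this
      rw [this, heps]
    have h8 : ((nu w).val).det = 1 := congrArg Units.val h7
    rw [hdet3] at h8
    have hc1 : c = 1 := by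
      have hunit : IsUnit c := by
        have : c * (c * c) = 1 := by linear_combination h8
        exact IsUnit.of_mul_eq_one _ this
      rcases Int.isUnit_iff.mp hunit with h | h
      · exact h
      · rw [h] at h8; norm_num at h8
    apply nu_eq_one
    apply Units.ext
    rw [hc, hc1]
    simp

end Main

section Assemble

/-- extensionality for automorphisms of `W 3` -/
theorem autExt {φ ψ : MulAut (W 3)} (h : ∀ i : Fin 3, φ (gen i) = ψ (gen i)) : φ = ψ := by
  have h2 : (φ : W 3 →* W 3) = (ψ : W 3 →* W 3) := homExt h
  exact MulEquiv.toMonoidHom_injective h2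

/-- the quotient map onto `Out(W₃)` -/
def piq : MulAut (W 3) →* OutW 3 := QuotientGroup.mk' (InnSub 3)

/-- the composite `W 3 → Out(W 3)` -/
def FF : W 3 →* OutW 3 := piq.comp Phi

theorem isPC_pc (i j : Fin 3) (hij : i ≠ j) : IsPC (pc i j hij) i {j} := by
  constructor
  · intro k hk
    rw [Finset.mem_singleton] at hk
    subst hk
    exact pcHom_gen_self i k
  · intro k hk
    rw [Finset.mem_singleton] at hk
    exact pcHom_gen_of_ne i j k hk

theorem FF_mem (w : W 3) : FF w ∈ Out0 3 := by
  apply PresentedGroup.generated_by _ ((Out0 3).comap FF)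
  intro j
  rw [Subgroup.mem_comap]
  apply Subgroup.subset_closure
  fin_cases j
  · exact ⟨pc 0 2 ne02, 0, {2}, by decide, isPC_pc 0 2 ne02,
      by show piq (Phi (gen 0)) = _; rw [show Phi (gen 0) = sig 0 from mkHom_gen _ _ _]; rfl⟩
  · exact ⟨pc 1 2 ne12, 1, {2}, by decide, isPC_pc 1 2 ne12,
      by show piq (Phi (gen 1)) = _; rw [show Phi (gen 1) = sig 1 from mkHom_gen _ _ _]; rfl⟩
  · exact ⟨pc 2 1 ne21, 2, {1}, by decide, isPC_pc 2 1 ne21,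
      by show piq (Phi (gen 2)) = _; rw [show Phi (gen 2) = sig 2 from mkHom_gen _ _ _]; rfl⟩

/-- the homomorphism `W 3 →* Out⁰(W 3)` -/
def fOut : W 3 →* ↥(Out0 3) := FF.codRestrict (Out0 3) FF_mem

theorem fOut_injective : Function.Injective fOut := by
  rw [injective_iff_map_eq_one]
  intro w hw
  have h1 : FF w = 1 := by
    have h0 : ((fOut w : ↥(Out0 3)) : OutW 3) = ((1 : ↥(Out0 3)) : OutW 3) := by rw [hw]
    simpa [fOut] using h0
  have h2 : Phi w ∈ InnSub 3 := by
    rw [← QuotientGroup.ker_mk' (InnSub 3)]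
    exact h1
  obtain ⟨g, hg⟩ := h2
  exact inner_imp_one hg.symm

end Assemble

section Surj

theorem piq_eq_one_of_inner {φ : MulAut (W 3)} (h : φ ∈ InnSub 3) : piq φ = 1 := by
  rw [← MonoidHom.mem_ker, piq, QuotientGroup.ker_mk']
  exact h

theorem range_case (i a b : Fin 3) (hab : a ≠ b) (hib : i ≠ b)
    (huniv : ∀ k : Fin 3, k = i ∨ k = a ∨ k = b)
    (hgenmem : piq (pc i b hib) ∈ FF.range)
    (φ : MulAut (W 3)) (D : Finset (Fin 3)) (hiD : i ∉ D)
    (hPC : IsPC φ i D) : piq φ ∈ FF.range := by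
  by_cases ha : a ∈ D <;> by_cases hb : b ∈ D
  · -- `φ` is conjugation by `gen i`
    have hφ : φ = MulAut.conj (gen i) := by
      apply autExt
      intro k
      rw [MulAut.conj_apply, gen_inv]
      rcases huniv k with rfl | rfl | rfl
      · rw [hPC.2 k hiD, gen_mul_self, one_mul]
      · exact hPC.1 k ha
      · exact hPC.1 k hb
    rw [hφ]
    rw [piq_eq_one_of_inner ⟨gen i, rfl⟩]
    exact one_mem _
  · -- `φ = conj (gen i) * pc i b`
    have hφ : φ = MulAut.conj (gen i) * pc i b hib := by
      apply autExt
      intro k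
      have hrhs : (MulAut.conj (gen i) * pc i b hib) (gen k)
          = gen i * (pcImg i b k) * gen i := by
        show MulAut.conj (gen i) (pc i b hib (gen k)) = _
        rw [pc_apply, pcHom_gen, MulAut.conj_apply, gen_inv]
      rw [hrhs]
      rcases huniv k with rfl | rfl | rfl
      · rw [hPC.2 k hiD, pcImg, if_neg hib, gen_mul_self, one_mul]
      · rw [hPC.1 k ha, pcImg, if_neg hab]
      · rw [hPC.2 k hb, pcImg, if_pos rfl]
        simp only [mul_assoc, gen_mul_cancel, gen_mul_self, mul_one]
    rw [hφ, map_mul, piq_eq_one_of_inner ⟨gen i, rfl⟩, one_mul]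
    exact hgenmem
  · -- `φ = pc i b`
    have hφ : φ = pc i b hib := by
      apply autExt
      intro k
      rw [pc_apply, pcHom_gen]
      rcases huniv k with rfl | rfl | rfl
      · rw [hPC.2 k hiD, pcImg, if_neg hib]
      · rw [hPC.2 k ha, pcImg, if_neg hab]
      · rw [hPC.1 k hb, pcImg, if_pos rfl]
    rw [hφ]
    exact hgenmem
  · -- `φ = 1`
    have hφ : φ = 1 := by
      apply autExt
      intro k
      have hone : (1 : MulAut (W 3)) (gen k) = gen k := rfl
      rw [hone]
      rcases huniv k with rfl | rfl | rfl
      · exact hPC.2 k hiD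
      · exact hPC.2 k ha
      · exact hPC.2 k hb
    rw [hφ, map_one]
    exact one_mem _

theorem FF_gen_eq (j : Fin 3) : FF (gen j) = piq (sig j) := by
  show piq (Phi (gen j)) = piq (sig j)
  rw [show Phi (gen j) = sig j from mkHom_gen _ _ _]

theorem out0_le_range : Out0 3 ≤ FF.range := by
  apply (Subgroup.closure_le _).2
  rintro q ⟨φ, i, D, hiD, hPC, rfl⟩
  show piq φ ∈ FF.range
  fin_cases i
  · refine range_case 0 1 2 (by decide) ne02 (by decide) ⟨gen 0, ?_⟩ φ D hiD hPC
    rw [FF_gen_eq]; rfl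
  · refine range_case 1 0 2 (by decide) ne12 (by decide) ⟨gen 1, ?_⟩ φ D hiD hPC
    rw [FF_gen_eq]; rfl
  · refine range_case 2 0 1 (by decide) ne21 (by decide) ⟨gen 2, ?_⟩ φ D hiD hPC
    rw [FF_gen_eq]; rfl

theorem fOut_surjective : Function.Surjective fOut := by
  intro x
  obtain ⟨w, hw⟩ := out0_le_range x.2
  exact ⟨w, Subtype.ext hw⟩

end Surj


/-- `Out⁰(W₃)` is isomorphic to `W₃`, the free product of three copies of `ℤ/2`
(equivalently, it has presentation `⟨y₁, y₂, y₃ ∣ y₁² = y₂² = y₃² = 1⟩` with no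
other relations, which is exactly the presentation defining `W 3`). -/
theorem stmt17 : Nonempty (↥(Out0 3) ≃* W 3) := by
  exact ⟨(MulEquiv.ofBijective fOut ⟨fOut_injective, fOut_surjective⟩).symm⟩
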